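/- Let Ω⁺ be the layer {0 ≤ η ≤ δ}, σ* : [0,δ] → ℝ≥0 with σ*(η) > 0 for η > 0, and let k_y, ω > 0. For v̂(y) = v₀e^{−ik_y y} extended holomorphically, and v̂*(η) = v̂(η + (1/(iω))∫₀^η σ*(u)du), one has |v̂*(η)| = |v̂(η)| · exp(−(k_y/ω)∫₀^η σ*(u)du), hence |v̂*(η)| < |v̂(η)| for every η ∈ (0, δ]. -/

import Mathlib

open Complex

theorem pml_exponential_decay (δ ky ω : ℝ) (hδ : 0 < δ) (hky : 0 < ky) (hω : 0 < ω)
    (σ : ℝ → ℝ) (hσc : ContinuousOn σ (Set.Icc 0 δ))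
    (hσ0 : ∀ η ∈ Set.Icc (0:ℝ) δ, 0 ≤ σ η)
    (hσpos : ∀ η ∈ Set.Ioc (0:ℝ) δ, 0 < σ η)
    (v₀ : ℂ) (hv₀ : v₀ ≠ 0)
    (vhat : ℂ → ℂ) (hvhat : ∀ z : ℂ, vhat z = v₀ * Complex.exp (-I * ky * z))
    (vstar : ℝ → ℂ)
    (hvstar : ∀ η : ℝ, vstar η =
      vhat (η + (1 / (I * ω)) * ((∫ u in (0:ℝ)..η, σ u : ℝ) : ℂ))) :
    ∀ η ∈ Set.Ioc (0:ℝ) δ,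
      ‖vstar η‖ =
        ‖vhat η‖ * Real.exp (-(ky / ω) * ∫ u in (0:ℝ)..η, σ u) ∧
      ‖vstar η‖ < ‖vhat η‖ := by
  intro η hη
  obtain ⟨hη0, hηδ⟩ := hη
  set S : ℝ := ∫ u in (0:ℝ)..η, σ u with hS
  have hωne : (ω : ℂ) ≠ 0 := by exact_mod_cast hω.ne'
  -- integral positive
  have hint : IntervalIntegrable σ MeasureTheory.volume 0 η := by
    apply ContinuousOn.intervalIntegrable
    apply hσc.mono
    rw [Set.uIcc_of_le hη0.le]
    exact Set.Icc_subset_Icc le_rfl hηδ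
  have hSpos : 0 < S := by
    apply intervalIntegral.intervalIntegral_pos_of_pos_on hint
    · intro x hx
      exact hσpos x ⟨hx.1, hx.2.le.trans hηδ⟩
    · exact hη0
  -- key algebraic identity
  have hkey : -I * (ky:ℂ) * ((η:ℂ) + (1 / (I * ω)) * (S:ℂ)) =
      -I * (ky:ℂ) * (η:ℂ) + ((-(ky / ω) * S : ℝ) : ℂ) := by
    push_cast
    field_simp
    ring_nf
  have habs : ‖vstar η‖ =
      ‖vhat η‖ * Real.exp (-(ky / ω) * S) := by
    rw [hvstar, hvhat, hvhat, hkey, Complex.exp_add]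
    simp [Complex.norm_exp, mul_assoc]
  refine ⟨habs, ?_⟩
  rw [habs]
  have hv : 0 < ‖vhat η‖ := by
    rw [hvhat]
    simp [norm_ne_zero_iff, hv₀, Complex.exp_ne_zero]
  have h1 : Real.exp (-(ky / ω) * S) < 1 := by
    rw [Real.exp_lt_one_iff]
    have : 0 < ky / ω * S := by positivity
    linarith
  nth_rewrite 2 [← mul_one (‖vhat η‖)]
  exact mul_lt_mul_of_pos_left h1 hv
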